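/- Sketch-and-project convergence with exact line-search step: if f_S satisfies f_S(x) = (1/2)⟨∇f_S(x), x − x*⟩ for all x (where x* is the projection of x onto the solution set), and f(x) = E_S f_S(x) satisfies the quadratic growth (λ_min⁺(W)/2)‖x − x*‖² ≤ f(x), then the iterates x^{k+1} = x^k − γ_k∇f_{S_k}(x^k) with γ_k = ⟨x^k − x*, ∇f_{S_k}(x^k)⟩/‖∇f_{S_k}(x^k)‖² satisfy E‖x^k − x*‖² ≤ (1 − λ_min⁺(W))^k‖x^0 − x*‖². -/
import Mathlib


open scoped RealInnerProductSpace

/-- Sketch-and-project convergence with the exact line-search (Polyak) step: if each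
`f_S` satisfies `f_S(x) = (1/2)⟨∇f_S(x), x − x*⟩ = (1/2)‖∇f_S(x)‖²` and
`f = E_S f_S` satisfies the quadratic growth `(λ⁺_min(W)/2)‖x − x*‖² ≤ f(x)`, then
the iterates with `γ_k = ⟨x^k − x*, ∇f_{S_k}(x^k)⟩/‖∇f_{S_k}(x^k)‖²` satisfy
`E‖x^k − x*‖² ≤ (1 − λ⁺_min(W))^k ‖x^0 − x*‖²`. -/
theorem stmt16 {d m : ℕ} (hm : 0 < m)
    (fS : Fin m → EuclideanSpace ℝ (Fin d) → ℝ)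
    (GS : Fin m → EuclideanSpace ℝ (Fin d) → EuclideanSpace ℝ (Fin d))
    (hgrad : ∀ s x, HasGradientAt (fS s) (GS s x) x)
    (xstar : EuclideanSpace ℝ (Fin d))
    (hid1 : ∀ s x, fS s x = (1 / 2) * ⟪GS s x, x - xstar⟫)
    (hid2 : ∀ s x, fS s x = (1 / 2) * ‖GS s x‖ ^ 2)
    (F : EuclideanSpace ℝ (Fin d) → ℝ)
    (hF : ∀ x, F x = (1 / (m : ℝ)) * ∑ s, fS s x)
    (lamW : ℝ) (hlam : 0 < lamW)
    (hgrowth : ∀ x, lamW / 2 * ‖x - xstar‖ ^ 2 ≤ F x)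
    (x0 : EuclideanSpace ℝ (Fin d))
    (Y : (k : ℕ) → (Fin k → Fin m) → EuclideanSpace ℝ (Fin d))
    (hY0 : ∀ ω, Y 0 ω = x0)
    (hYstep : ∀ (k : ℕ) (ω : Fin (k + 1) → Fin m),
      Y (k + 1) ω =
        Y k (fun j => ω j.castSucc) -
          ((⟪Y k (fun j => ω j.castSucc) - xstar,
              GS (ω (Fin.last k)) (Y k (fun j => ω j.castSucc))⟫ : ℝ) /
            ‖GS (ω (Fin.last k)) (Y k (fun j => ω j.castSucc))‖ ^ 2) •
            GS (ω (Fin.last k)) (Y k (fun j => ω j.castSucc))) :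
    ∀ k : ℕ, (1 / (m : ℝ) ^ k) * ∑ ω : Fin k → Fin m, ‖Y k ω - xstar‖ ^ 2 ≤
      (1 - lamW) ^ k * ‖x0 - xstar‖ ^ 2 := by
  have hmR : (0 : ℝ) < (m : ℝ) := by exact_mod_cast hm
  -- key identity: ⟪GS s x, x - x*⟫ = ‖GS s x‖²
  have hgg : ∀ s x, (⟪GS s x, x - xstar⟫ : ℝ) = ‖GS s x‖ ^ 2 := by
    intro s x
    have h1 := hid1 s x
    have h2 := hid2 s x
    linarith [h1.symm.trans h2]
  -- one-step contraction identity
  have hstep : ∀ (s : Fin m) (x : EuclideanSpace ℝ (Fin d)),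
      ‖x - ((⟪x - xstar, GS s x⟫ : ℝ) / ‖GS s x‖ ^ 2) • GS s x - xstar‖ ^ 2
        = ‖x - xstar‖ ^ 2 - 2 * fS s x := by
    intro s x
    by_cases hg : GS s x = 0
    · have : fS s x = 0 := by rw [hid2 s x, hg]; simp
      simp [hg, this]
    · have hn : ‖GS s x‖ ^ 2 ≠ 0 := by
        simpa using pow_ne_zero 2 (norm_ne_zero_iff.mpr hg)
      have hc : (⟪x - xstar, GS s x⟫ : ℝ) = ‖GS s x‖ ^ 2 := by
        rw [real_inner_comm]; exact hgg s x
      rw [hc, div_self hn, one_smul]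
      have hrw : x - GS s x - xstar = (x - xstar) - GS s x := by
        abel
      rw [hrw, norm_sub_sq_real, real_inner_comm, hgg s x, hid2 s x]
      ring
  -- average contraction
  have havg : ∀ (x : EuclideanSpace ℝ (Fin d)),
      ∑ s : Fin m, (‖x - xstar‖ ^ 2 - 2 * fS s x)
        ≤ (m : ℝ) * ((1 - lamW) * ‖x - xstar‖ ^ 2) := by
    intro x
    have hsum : ∑ s : Fin m, fS s x = (m : ℝ) * F x := by
      rw [hF x]; field_simp
    have hgr := hgrowth x
    rw [Finset.sum_sub_distrib, ← Finset.mul_sum, Finset.sum_const,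
      Finset.card_univ, Fintype.card_fin, nsmul_eq_mul, hsum]
    nlinarith [hgr]
  intro k
  induction k with
  | zero =>
    simp [hY0]
  | succ k ih =>
    -- reindex the sum over Fin (k+1) → Fin m
    have hre : ∑ ω : Fin (k + 1) → Fin m, ‖Y (k + 1) ω - xstar‖ ^ 2
        = ∑ p : Fin m × (Fin k → Fin m),
            ‖Y (k + 1) (Fin.snoc p.2 p.1) - xstar‖ ^ 2 := by
      refine (Fintype.sum_equiv (Fin.snocEquiv fun _ => Fin m) _ _ ?_).symm
      intro p
      rfl
    have hval : ∀ (s : Fin m) (ω' : Fin k → Fin m),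
        ‖Y (k + 1) (Fin.snoc ω' s) - xstar‖ ^ 2
          = ‖Y k ω' - xstar‖ ^ 2 - 2 * fS s (Y k ω') := by
      intro s ω'
      have h := hYstep k (Fin.snoc ω' s)
      have h1 : (fun j : Fin k => (Fin.snoc ω' s : Fin (k+1) → Fin m) j.castSucc) = ω' := by
        funext j; simp
      have h2 : (Fin.snoc ω' s : Fin (k+1) → Fin m) (Fin.last k) = s := by simp
      rw [h1, h2] at h
      rw [h, hstep s (Y k ω')]
    have hbound : ∑ ω : Fin (k + 1) → Fin m, ‖Y (k + 1) ω - xstar‖ ^ 2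
        ≤ (m : ℝ) * ((1 - lamW) * ∑ ω' : Fin k → Fin m, ‖Y k ω' - xstar‖ ^ 2) := by
      rw [hre, Fintype.sum_prod_type_right]
      calc ∑ ω' : Fin k → Fin m, ∑ s : Fin m, ‖Y (k+1) (Fin.snoc ω' s) - xstar‖ ^ 2
          ≤ ∑ ω' : Fin k → Fin m, (m : ℝ) * ((1 - lamW) * ‖Y k ω' - xstar‖ ^ 2) := by
            refine Finset.sum_le_sum fun ω' _ => ?_
            calc ∑ s : Fin m, ‖Y (k+1) (Fin.snoc ω' s) - xstar‖ ^ 2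
                = ∑ s : Fin m, (‖Y k ω' - xstar‖ ^ 2 - 2 * fS s (Y k ω')) := by
                  exact Finset.sum_congr rfl fun s _ => hval s ω'
              _ ≤ (m : ℝ) * ((1 - lamW) * ‖Y k ω' - xstar‖ ^ 2) := havg (Y k ω')
        _ = (m : ℝ) * ((1 - lamW) * ∑ ω' : Fin k → Fin m, ‖Y k ω' - xstar‖ ^ 2) := by
            rw [Finset.mul_sum, Finset.mul_sum]
    -- handle the two cases
    by_cases hx0 : x0 = xstar
    · -- all iterates equal xstar
      have hGzero : ∀ s, GS s xstar = 0 := by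
        intro s
        have h1 := hid1 s xstar
        have h2 := hid2 s xstar
        simp only [sub_self, inner_zero_right, mul_zero] at h1
        rw [h1] at h2
        have : ‖GS s xstar‖ ^ 2 = 0 := by linarith
        have := pow_eq_zero_iff (n := 2) (by norm_num) |>.mp this
        exact norm_eq_zero.mp this
      have hall : ∀ (n : ℕ) (ω : Fin n → Fin m), Y n ω = xstar := by
        intro n
        induction n with
        | zero => intro ω; rw [hY0, hx0]
        | succ n ihn =>
          intro ω
          rw [hYstep n ω, ihn (fun j => ω j.castSucc), hGzero, sub_self,
            smul_zero, sub_zero]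
      have : ∑ ω : Fin (k+1) → Fin m, ‖Y (k+1) ω - xstar‖ ^ 2 = 0 := by
        refine Finset.sum_eq_zero fun ω _ => ?_
        rw [hall (k+1) ω]; simp
      rw [this, hx0]
      simp
    · -- lamW ≤ 1
      have hCpos : (0 : ℝ) < ‖x0 - xstar‖ ^ 2 := by
        have h0 : x0 - xstar ≠ 0 := sub_ne_zero.mpr hx0
        exact pow_pos (norm_pos_iff.mpr h0) 2
      have hF0 : F x0 ≤ (1 / 2) * ‖x0 - xstar‖ ^ 2 := by
        rw [hF x0]
        have hfs : ∀ s, fS s x0 ≤ (1 / 2) * ‖x0 - xstar‖ ^ 2 := by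
          intro s
          have hcs := real_inner_le_norm (GS s x0) (x0 - xstar)
          have h1 := hid1 s x0
          have h2 := hid2 s x0
          have hg := hgg s x0
          nlinarith [norm_nonneg (GS s x0), norm_nonneg (x0 - xstar),
            sq_nonneg (‖GS s x0‖ - ‖x0 - xstar‖)]
        calc (1 / (m:ℝ)) * ∑ s, fS s x0
            ≤ (1 / (m:ℝ)) * ∑ s : Fin m, (1 / 2) * ‖x0 - xstar‖ ^ 2 := by
              apply mul_le_mul_of_nonneg_left (Finset.sum_le_sum fun s _ => hfs s)
              positivity
          _ = (1 / 2) * ‖x0 - xstar‖ ^ 2 := by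
              rw [Finset.sum_const, Finset.card_univ, Fintype.card_fin, nsmul_eq_mul]
              field_simp
      have hlam1 : lamW ≤ 1 := by
        have := hgrowth x0
        nlinarith [hCpos]
      have hnn : (0 : ℝ) ≤ 1 - lamW := by linarith
      have hmpow : (0 : ℝ) < (m : ℝ) ^ (k + 1) := by positivity
      calc (1 / (m : ℝ) ^ (k+1)) * ∑ ω : Fin (k+1) → Fin m, ‖Y (k+1) ω - xstar‖ ^ 2
          ≤ (1 / (m : ℝ) ^ (k+1)) *
              ((m : ℝ) * ((1 - lamW) * ∑ ω' : Fin k → Fin m, ‖Y k ω' - xstar‖ ^ 2)) := by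
            apply mul_le_mul_of_nonneg_left hbound
            positivity
        _ = (1 - lamW) * ((1 / (m : ℝ) ^ k) * ∑ ω' : Fin k → Fin m, ‖Y k ω' - xstar‖ ^ 2) := by
            field_simp
            ring
        _ ≤ (1 - lamW) * ((1 - lamW) ^ k * ‖x0 - xstar‖ ^ 2) :=
            mul_le_mul_of_nonneg_left ih hnn
        _ = (1 - lamW) ^ (k+1) * ‖x0 - xstar‖ ^ 2 := by ring
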